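/- Let p be an odd prime, a ∈ {0,…,p-1}, s an integer, α = a + sp, and 0 ≤ k ≤ p-1. Then qbinom(α, k) ≡ q^{spk} qbinom(a, k) + Σ_{j=1}^{k} ([sp]_q / [j]_q) (-1)^{j-1} q^{-binom(j,2) - j(k-j)} qbinom(a, k-j) (mod Φ_p(q)²), as elements of ℤ[q, q^{-1}] (the difference divided by Φ_p(q)² lies in ℤ[q,q^{-1}] localized at polynomials coprime to Φ_p). -/

import Mathlib

open Polynomial Finset

/-- The variable `q` as a rational function over `ℚ`. -/
noncomputable def qv : RatFunc ℚ := RatFunc.X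

/-- The q-Pochhammer symbol `(x; t)_k = (1-x)(1-xt)⋯(1-xt^{k-1})`. -/
noncomputable def qPochAt (x t : RatFunc ℚ) (k : ℕ) : RatFunc ℚ :=
  ∏ i ∈ Finset.range k, (1 - x * t ^ i)

/-- The Gaussian binomial coefficient `[α choose k]_t = (t^{α-k+1}; t)_k / (t; t)_k`
with integer upper argument. -/
noncomputable def qbinomAt (t : RatFunc ℚ) (α : ℤ) (k : ℕ) : RatFunc ℚ :=
  (∏ i ∈ Finset.range k, (1 - t ^ (α - k + 1 + i))) /
    (∏ i ∈ Finset.range k, (1 - t ^ (i + 1)))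

/-- The Gaussian binomial coefficient in the variable `q`. -/
noncomputable def qbinom (α : ℤ) (k : ℕ) : RatFunc ℚ := qbinomAt qv α k

/-- The image of an integer polynomial in `RatFunc ℚ`. -/
noncomputable def toF (g : Polynomial ℤ) : RatFunc ℚ :=
  Polynomial.aeval (RatFunc.X : RatFunc ℚ) g

/-- `A ≡ B (mod Φ_n(q)^m)` in the localization of `ℤ[q]` at polynomials coprime
to `Φ_n`: there are `f g : ℤ[q]` with `Φ_n ∤ g` and `(A - B) * g = Φ_n^m * f`. -/
def modCong (n m : ℕ) (A B : RatFunc ℚ) : Prop :=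
  ∃ f g : Polynomial ℤ, ¬ (Polynomial.cyclotomic n ℤ ∣ g) ∧
    (A - B) * toF g = toF ((Polynomial.cyclotomic n ℤ) ^ m * f)

/-- The q-integer `[m]_q = (1-q^m)/(1-q)`. -/
noncomputable def qint (m : ℤ) : RatFunc ℚ := (1 - qv ^ m) / (1 - qv)

-- basic facts
lemma qv_ne_zero : qv ≠ 0 := RatFunc.X_ne_zero

lemma qv_pow_ne_one {n : ℕ} (hn : n ≠ 0) : qv ^ n ≠ 1 := by
  intro h
  have h1 : algebraMap ℚ[X] (RatFunc ℚ) (Polynomial.X ^ n) = algebraMap ℚ[X] (RatFunc ℚ) 1 := by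
    rw [map_pow, map_one, ← RatFunc.X]; exact h
  have h3 : (Polynomial.X ^ n : ℚ[X]) = 1 := IsFractionRing.injective ℚ[X] (RatFunc ℚ) h1
  have := congrArg Polynomial.natDegree h3
  simp [Polynomial.natDegree_X_pow] at this
  exact hn this

lemma qv_zpow_ne_one {z : ℤ} (hz : z ≠ 0) : qv ^ z ≠ 1 := by
  rcases z.lt_or_lt_of_ne hz with h | h
  · intro he
    have : qv ^ (-z) = 1 := by
      rw [zpow_neg, he, inv_one]
    have hn : (-z).toNat ≠ 0 := by omega
    have : qv ^ ((-z).toNat) = 1 := by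
      rw [← zpow_natCast, Int.toNat_of_nonneg (by omega)]; exact this
    exact qv_pow_ne_one hn this
  · intro he
    have hn : z.toNat ≠ 0 := by omega
    have : qv ^ (z.toNat) = 1 := by
      rw [← zpow_natCast, Int.toNat_of_nonneg (by omega)]; exact he
    exact qv_pow_ne_one hn this

lemma one_sub_qv_zpow_ne_zero {z : ℤ} (hz : z ≠ 0) : 1 - qv ^ z ≠ 0 := by
  intro h
  exact qv_zpow_ne_one hz (by linear_combination -h)

lemma one_sub_qv_pow_ne_zero {n : ℕ} (hn : n ≠ 0) : 1 - qv ^ n ≠ 0 := by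
  intro h
  exact qv_pow_ne_one hn (by linear_combination -h)

-- toF lemmas
lemma toF_mul (a b : Polynomial ℤ) : toF (a * b) = toF a * toF b := map_mul _ a b
lemma toF_add (a b : Polynomial ℤ) : toF (a + b) = toF a + toF b := map_add _ a b
lemma toF_sub (a b : Polynomial ℤ) : toF (a - b) = toF a - toF b := map_sub _ a b
lemma toF_neg (a : Polynomial ℤ) : toF (-a) = - toF a := map_neg _ a
lemma toF_one : toF 1 = 1 := map_one _
lemma toF_pow (a : Polynomial ℤ) (n : ℕ) : toF (a ^ n) = toF a ^ n := map_pow _ a n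
lemma toF_X : toF Polynomial.X = qv := Polynomial.aeval_X _

lemma Phi_prime {p : ℕ} (hp : p.Prime) : Prime (Polynomial.cyclotomic p ℤ) :=
  UniqueFactorizationMonoid.irreducible_iff_prime.mp (Polynomial.cyclotomic.irreducible hp.pos)

lemma p_big {p : ℕ} (hp : p.Prime) (hodd : Odd p) : 3 ≤ p := by
  have h2 := hp.two_le
  rcases Nat.eq_or_lt_of_le h2 with h | h
  · exfalso; rw [← h] at hodd; exact (by decide : ¬ Odd 2) hodd
  · omega

lemma Phi_natDegree {p : ℕ} (hp : p.Prime) : (Polynomial.cyclotomic p ℤ).natDegree = p - 1 := by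
  rw [Polynomial.natDegree_cyclotomic, Nat.totient_prime hp]

lemma Phi_not_dvd_X_pow {p : ℕ} (hp : p.Prime) (hodd : Odd p) (n : ℕ) :
    ¬ Polynomial.cyclotomic p ℤ ∣ Polynomial.X ^ n := by
  intro h
  have h2 := (Phi_prime hp).dvd_of_dvd_pow (n := n) (by simpa using h)
  have := Polynomial.natDegree_le_of_dvd h2 Polynomial.X_ne_zero
  rw [Phi_natDegree hp, Polynomial.natDegree_X] at this
  have := p_big hp hodd
  omega

lemma Phi_not_dvd_one_sub_X_pow {p : ℕ} (hp : p.Prime) (hodd : Odd p) {i : ℕ}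
    (h1 : 1 ≤ i) (h2 : i ≤ p - 1) :
    ¬ Polynomial.cyclotomic p ℤ ∣ (1 - Polynomial.X ^ i) := by
  intro h
  have hd : Polynomial.cyclotomic p ℤ ∣ (Polynomial.X ^ i - Polynomial.C 1) := by
    have : (Polynomial.X ^ i - Polynomial.C 1 : Polynomial ℤ) = -(1 - Polynomial.X ^ i) := by
      rw [Polynomial.C_1]; ring
    rw [this]; exact h.neg_right
  have hne : (Polynomial.X ^ i - Polynomial.C 1 : Polynomial ℤ) ≠ 0 := by
    intro hz
    have := congrArg Polynomial.natDegree hz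
    rw [Polynomial.natDegree_X_pow_sub_C] at this
    simp at this; omega
  have hdeg := Polynomial.natDegree_le_of_dvd hd hne
  rw [Phi_natDegree hp, Polynomial.natDegree_X_pow_sub_C] at hdeg
  have hi : i = p - 1 := by omega
  subst hi
  obtain ⟨c, hc⟩ := hd
  have hcd : c.natDegree = 0 := by
    have h0 := congrArg Polynomial.natDegree hc
    rw [Polynomial.natDegree_X_pow_sub_C, Polynomial.natDegree_mul, Phi_natDegree hp] at h0
    · omega
    · exact (Phi_prime hp).ne_zero
    · rintro rfl; simp at hc; exact hne hc
  have he := congrArg (Polynomial.eval 1) hc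
  have : Fact p.Prime := ⟨hp⟩
  rw [Polynomial.eval_mul, Polynomial.eval_one_cyclotomic_prime] at he
  simp at he
  obtain ⟨b, rfl⟩ := Polynomial.natDegree_eq_zero.mp hcd
  simp at he
  rcases he with he | he
  · exact hp.ne_zero (by exact_mod_cast he)
  · subst he; simp at hc; exact hne hc
-- Localization predicate
def Loc (p : ℕ) (A : RatFunc ℚ) : Prop :=
  ∃ f g : Polynomial ℤ, ¬ (Polynomial.cyclotomic p ℤ ∣ g) ∧ A * toF g = toF f

section Toolkit
variable {p : ℕ}

lemma Phi_not_dvd_one (hp : p.Prime) : ¬ (Polynomial.cyclotomic p ℤ ∣ (1 : Polynomial ℤ)) :=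
  fun h => (Phi_prime hp).not_unit (isUnit_of_dvd_one h)

lemma Loc_toF (hp : p.Prime) (f : Polynomial ℤ) : Loc p (toF f) :=
  ⟨f, 1, Phi_not_dvd_one hp, by rw [toF_one, mul_one]⟩

lemma Loc_one (hp : p.Prime) : Loc p 1 := by simpa [toF_one] using Loc_toF hp 1

lemma Loc_zero (hp : p.Prime) : Loc p 0 := by
  refine ⟨0, 1, Phi_not_dvd_one hp, by simp [toF_one]; exact (map_zero _).symm⟩

lemma Loc_mul (hp : p.Prime) {A B : RatFunc ℚ} (hA : Loc p A) (hB : Loc p B) :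
    Loc p (A * B) := by
  obtain ⟨f1, g1, hg1, h1⟩ := hA
  obtain ⟨f2, g2, hg2, h2⟩ := hB
  refine ⟨f1 * f2, g1 * g2, fun h => ?_, ?_⟩
  · rcases (Phi_prime hp).dvd_mul.mp h with h | h
    exacts [hg1 h, hg2 h]
  · rw [toF_mul, toF_mul]
    calc A * B * (toF g1 * toF g2) = (A * toF g1) * (B * toF g2) := by ring
    _ = toF f1 * toF f2 := by rw [h1, h2]

lemma Loc_neg {A : RatFunc ℚ} (hA : Loc p A) : Loc p (-A) := by
  obtain ⟨f1, g1, hg1, h1⟩ := hA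
  exact ⟨-f1, g1, hg1, by rw [toF_neg, neg_mul, h1]⟩

lemma Loc_add (hp : p.Prime) {A B : RatFunc ℚ} (hA : Loc p A) (hB : Loc p B) :
    Loc p (A + B) := by
  obtain ⟨f1, g1, hg1, h1⟩ := hA
  obtain ⟨f2, g2, hg2, h2⟩ := hB
  refine ⟨f1 * g2 + f2 * g1, g1 * g2, fun h => ?_, ?_⟩
  · rcases (Phi_prime hp).dvd_mul.mp h with h | h
    exacts [hg1 h, hg2 h]
  · rw [toF_add, toF_mul, toF_mul, toF_mul]
    calc (A + B) * (toF g1 * toF g2)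
        = (A * toF g1) * toF g2 + (B * toF g2) * toF g1 := by ring
    _ = toF f1 * toF g2 + toF f2 * toF g1 := by rw [h1, h2]

lemma Loc_qv_zpow (hp : p.Prime) (hodd : Odd p) (z : ℤ) : Loc p (qv ^ z) := by
  rcases le_or_gt 0 z with h | h
  · refine ⟨Polynomial.X ^ z.toNat, 1, Phi_not_dvd_one hp, ?_⟩
    rw [toF_one, mul_one, toF_pow, toF_X, ← zpow_natCast, Int.toNat_of_nonneg h]
  · refine ⟨1, Polynomial.X ^ (-z).toNat, Phi_not_dvd_X_pow hp hodd _, ?_⟩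
    rw [toF_pow, toF_X, toF_one, ← zpow_natCast, Int.toNat_of_nonneg (by omega),
      ← zpow_add₀ qv_ne_zero]
    simp

lemma Loc_one_sub_qv_zpow (hp : p.Prime) (hodd : Odd p) (z : ℤ) : Loc p (1 - qv ^ z) := by
  have h1 : (1 - qv ^ z : RatFunc ℚ) = 1 + (-(qv ^ z)) := by ring
  rw [h1]
  exact Loc_add hp (Loc_one hp) (Loc_neg (Loc_qv_zpow hp hodd z))

lemma toF_one_sub_X_pow (i : ℕ) : toF (1 - Polynomial.X ^ i) = 1 - qv ^ i := by
  rw [toF_sub, toF_one, toF_pow, toF_X]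

lemma Loc_inv_one_sub_qv_pow (hp : p.Prime) (hodd : Odd p) {i : ℕ} (h1 : 1 ≤ i)
    (h2 : i ≤ p - 1) : Loc p ((1 - qv ^ i)⁻¹) := by
  refine ⟨1, 1 - Polynomial.X ^ i, Phi_not_dvd_one_sub_X_pow hp hodd h1 h2, ?_⟩
  rw [toF_one_sub_X_pow, toF_one,
    inv_mul_cancel₀ (one_sub_qv_pow_ne_zero (by omega))]

lemma Loc_sum (hp : p.Prime) {ι : Type*} {s : Finset ι} {f : ι → RatFunc ℚ}
    (h : ∀ i ∈ s, Loc p (f i)) : Loc p (∑ i ∈ s, f i) := by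
  classical
  induction s using Finset.induction with
  | empty => simpa using Loc_zero hp
  | @insert a s' hx ih =>
    rw [Finset.sum_insert hx]
    exact Loc_add hp (h a (by simp)) (ih fun i hi => h i (by simp [hi]))

lemma Loc_prod (hp : p.Prime) {ι : Type*} {s : Finset ι} {f : ι → RatFunc ℚ}
    (h : ∀ i ∈ s, Loc p (f i)) : Loc p (∏ i ∈ s, f i) := by
  classical
  induction s using Finset.induction with
  | empty => simpa using Loc_one hp
  | @insert a s' hx ih =>
    rw [Finset.prod_insert hx]
    exact Loc_mul hp (h a (by simp)) (ih fun i hi => h i (by simp [hi]))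

-- modCong toolkit
lemma modCong_refl (hp : p.Prime) (m : ℕ) (A : RatFunc ℚ) : modCong p m A A :=
  ⟨0, 1, Phi_not_dvd_one hp, by simp [toF_one]; exact (map_zero _).symm⟩

lemma modCong_of_eq (hp : p.Prime) {m : ℕ} {A B : RatFunc ℚ} (h : A = B) :
    modCong p m A B := h ▸ modCong_refl hp m A

lemma modCong_symm {m : ℕ} {A B : RatFunc ℚ} (h : modCong p m A B) : modCong p m B A := by
  obtain ⟨f, g, hg, hh⟩ := h
  refine ⟨-f, g, hg, ?_⟩
  have h2 : (B - A) * toF g = -((A - B) * toF g) := by ring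
  rw [h2, hh, ← toF_neg]
  congr 1; ring

lemma modCong_trans (hp : p.Prime) {m : ℕ} {A B C : RatFunc ℚ}
    (h1 : modCong p m A B) (h2 : modCong p m B C) : modCong p m A C := by
  obtain ⟨f1, g1, hg1, hh1⟩ := h1
  obtain ⟨f2, g2, hg2, hh2⟩ := h2
  refine ⟨f1 * g2 + f2 * g1, g1 * g2, fun h => ?_, ?_⟩
  · rcases (Phi_prime hp).dvd_mul.mp h with h | h
    exacts [hg1 h, hg2 h]
  · rw [toF_mul, mul_add, toF_add, toF_mul, toF_mul, toF_mul]
    calc (A - C) * (toF g1 * toF g2)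
        = ((A - B) * toF g1) * toF g2 + ((B - C) * toF g2) * toF g1 := by ring
    _ = toF (Polynomial.cyclotomic p ℤ ^ m * f1) * toF g2
        + toF (Polynomial.cyclotomic p ℤ ^ m * f2) * toF g1 := by rw [hh1, hh2]
    _ = _ := by simp only [toF_mul, toF_pow]; ring

lemma modCong_add (hp : p.Prime) {m : ℕ} {A B C D : RatFunc ℚ}
    (h1 : modCong p m A B) (h2 : modCong p m C D) : modCong p m (A + C) (B + D) := by
  obtain ⟨f1, g1, hg1, hh1⟩ := h1
  obtain ⟨f2, g2, hg2, hh2⟩ := h2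
  refine ⟨f1 * g2 + f2 * g1, g1 * g2, fun h => ?_, ?_⟩
  · rcases (Phi_prime hp).dvd_mul.mp h with h | h
    exacts [hg1 h, hg2 h]
  · rw [toF_mul, mul_add, toF_add, toF_mul, toF_mul, toF_mul]
    calc (A + C - (B + D)) * (toF g1 * toF g2)
        = ((A - B) * toF g1) * toF g2 + ((C - D) * toF g2) * toF g1 := by ring
    _ = toF (Polynomial.cyclotomic p ℤ ^ m * f1) * toF g2
        + toF (Polynomial.cyclotomic p ℤ ^ m * f2) * toF g1 := by rw [hh1, hh2]
    _ = _ := by simp only [toF_mul, toF_pow]; ring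

lemma modCong_neg {m : ℕ} {A B : RatFunc ℚ} (h : modCong p m A B) :
    modCong p m (-A) (-B) := by
  obtain ⟨f, g, hg, hh⟩ := h
  refine ⟨-f, g, hg, ?_⟩
  have h2 : (-A - -B) * toF g = -((A - B) * toF g) := by ring
  rw [h2, hh, ← toF_neg]
  congr 1; ring

lemma modCong_sub (hp : p.Prime) {m : ℕ} {A B C D : RatFunc ℚ}
    (h1 : modCong p m A B) (h2 : modCong p m C D) : modCong p m (A - C) (B - D) := by
  have := modCong_add hp h1 (modCong_neg h2)
  simpa [sub_eq_add_neg] using this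

lemma modCong_mul (hp : p.Prime) {m : ℕ} {A B C D : RatFunc ℚ}
    (h1 : modCong p m A B) (h2 : modCong p m C D) (hC : Loc p C) (hB : Loc p B) :
    modCong p m (A * C) (B * D) := by
  obtain ⟨f1, g1, hg1, hh1⟩ := h1
  obtain ⟨f2, g2, hg2, hh2⟩ := h2
  obtain ⟨c, gc, hgc, hhc⟩ := hC
  obtain ⟨b, gb, hgb, hhb⟩ := hB
  refine ⟨f1 * c * g2 * gb + f2 * b * g1 * gc, g1 * g2 * gc * gb, fun h => ?_, ?_⟩
  · rcases (Phi_prime hp).dvd_mul.mp h with h | h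
    · rcases (Phi_prime hp).dvd_mul.mp h with h | h
      · rcases (Phi_prime hp).dvd_mul.mp h with h | h
        exacts [hg1 h, hg2 h]
      · exact hgc h
    · exact hgb h
  · rw [toF_mul, toF_mul, toF_mul, mul_add, toF_add]
    calc (A * C - B * D) * (toF g1 * toF g2 * toF gc * toF gb)
        = ((A - B) * toF g1) * (C * toF gc) * toF g2 * toF gb
          + (B * toF gb) * ((C - D) * toF g2) * toF g1 * toF gc := by ring
    _ = toF (Polynomial.cyclotomic p ℤ ^ m * f1) * toF c * toF g2 * toF gb
        + toF b * toF (Polynomial.cyclotomic p ℤ ^ m * f2) * toF g1 * toF gc := by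
          rw [hh1, hh2, hhc, hhb]
    _ = _ := by simp only [toF_mul]; ring

lemma modCong_mul_zero (hp : p.Prime) {U V W : RatFunc ℚ}
    (h1 : modCong p 1 U 0) (h2 : modCong p 1 V W) : modCong p 2 (U * V) (U * W) := by
  obtain ⟨f1, g1, hg1, hh1⟩ := h1
  obtain ⟨f2, g2, hg2, hh2⟩ := h2
  rw [sub_zero] at hh1
  refine ⟨f1 * f2, g1 * g2, fun h => ?_, ?_⟩
  · rcases (Phi_prime hp).dvd_mul.mp h with h | h
    exacts [hg1 h, hg2 h]
  · rw [toF_mul]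
    calc (U * V - U * W) * (toF g1 * toF g2)
        = (U * toF g1) * ((V - W) * toF g2) := by ring
    _ = toF (Polynomial.cyclotomic p ℤ ^ 1 * f1) * toF (Polynomial.cyclotomic p ℤ ^ 1 * f2) := by
          rw [hh1, hh2]
    _ = _ := by simp only [toF_mul, toF_pow]; ring

lemma modCong_sum_cong (hp : p.Prime) {m : ℕ} {ι : Type*} {s : Finset ι}
    {f g : ι → RatFunc ℚ} (h : ∀ i ∈ s, modCong p m (f i) (g i)) :
    modCong p m (∑ i ∈ s, f i) (∑ i ∈ s, g i) := by
  classical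
  induction s using Finset.induction with
  | empty => simpa using modCong_refl hp m 0
  | @insert a s' hx ih =>
    rw [Finset.sum_insert hx, Finset.sum_insert hx]
    exact modCong_add hp (h a (by simp)) (ih fun i hi => h i (by simp [hi]))

lemma modCong_prod_cong (hp : p.Prime) {m : ℕ} {ι : Type*} {s : Finset ι}
    {f g : ι → RatFunc ℚ} (h : ∀ i ∈ s, modCong p m (f i) (g i))
    (hf : ∀ i ∈ s, Loc p (f i)) (hg : ∀ i ∈ s, Loc p (g i)) :
    modCong p m (∏ i ∈ s, f i) (∏ i ∈ s, g i) := by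
  classical
  induction s using Finset.induction with
  | empty => simpa using modCong_refl hp m 1
  | @insert a s' hx ih =>
    rw [Finset.prod_insert hx, Finset.prod_insert hx]
    refine modCong_mul hp (h a (by simp)) (ih (fun i hi => h i (by simp [hi]))
      (fun i hi => hf i (by simp [hi])) (fun i hi => hg i (by simp [hi])))
      (Loc_prod hp fun i hi => hf i (by simp [hi])) (hg a (by simp))

end Toolkit
section Atomic
variable {p : ℕ}

lemma Phi_dvd_X_pow_mul_sub_one (n : ℕ) :
    Polynomial.cyclotomic p ℤ ∣ (Polynomial.X ^ (p * n) - 1) := by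
  have h1 : Polynomial.cyclotomic p ℤ ∣ (Polynomial.X ^ p - 1 : Polynomial ℤ) :=
    Polynomial.cyclotomic.dvd_X_pow_sub_one p ℤ
  have h2 : (Polynomial.X ^ p - 1 : Polynomial ℤ) ∣ (Polynomial.X ^ (p * n) - 1) := by
    have := sub_dvd_pow_sub_pow (Polynomial.X ^ p : Polynomial ℤ) 1 n
    simpa [← pow_mul] using this
  exact h1.trans h2

lemma modCong_qv_p_mul (hp : p.Prime) (hodd : Odd p) (z : ℤ) :
    modCong p 1 (qv ^ ((p : ℤ) * z)) 1 := by
  rcases le_or_gt 0 z with h | h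
  · obtain ⟨c, hc⟩ := Phi_dvd_X_pow_mul_sub_one (p := p) z.toNat
    refine ⟨c, 1, Phi_not_dvd_one hp, ?_⟩
    rw [toF_one, mul_one, pow_one, ← hc, toF_sub, toF_one, toF_pow, toF_X]
    congr 1
    rw [← zpow_natCast]
    congr 1
    push_cast [Int.toNat_of_nonneg h]
    ring
  · obtain ⟨c, hc⟩ := Phi_dvd_X_pow_mul_sub_one (p := p) (-z).toNat
    refine ⟨-c, Polynomial.X ^ (p * (-z).toNat), Phi_not_dvd_X_pow hp hodd _, ?_⟩
    have he : ((p * (-z).toNat : ℕ) : ℤ) = -((p:ℤ) * z) := by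
      push_cast [Int.toNat_of_nonneg (by omega : (0:ℤ) ≤ -z)]
      ring
    have hL : (qv ^ ((p:ℤ) * z) - 1) * toF (Polynomial.X ^ (p * (-z).toNat))
        = -(toF (Polynomial.X ^ (p * (-z).toNat) - 1)) := by
      rw [toF_sub, toF_pow, toF_X, toF_one, ← zpow_natCast qv, he]
      rw [sub_mul, one_mul, ← zpow_add₀ qv_ne_zero]
      simp
    rw [hL, hc, toF_mul, toF_mul, toF_neg, pow_one]
    ring

lemma modCong_qv_zpow (hp : p.Prime) (hodd : Odd p) {c d : ℤ} (h : (p : ℤ) ∣ c - d) :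
    modCong p 1 (qv ^ c) (qv ^ d) := by
  obtain ⟨z, hz⟩ := h
  have h1 : qv ^ c = qv ^ ((p : ℤ) * z) * qv ^ d := by
    rw [← zpow_add₀ qv_ne_zero]
    congr 1; omega
  have h2 : qv ^ d = 1 * qv ^ d := (one_mul _).symm
  rw [h1]
  nth_rewrite 2 [h2]
  exact modCong_mul hp (modCong_qv_p_mul hp hodd z) (modCong_refl hp 1 (qv ^ d))
    (Loc_qv_zpow hp hodd d) (Loc_one hp)

lemma modCong_one_sub_qv_zpow (hp : p.Prime) (hodd : Odd p) {c d : ℤ} (h : (p : ℤ) ∣ c - d) :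
    modCong p 1 (1 - qv ^ c) (1 - qv ^ d) :=
  modCong_sub hp (modCong_refl hp 1 1) (modCong_qv_zpow hp hodd h)

lemma modCong_qint_pmul (hp : p.Prime) (hodd : Odd p) (s : ℤ) :
    modCong p 1 (qint (s * p)) 0 := by
  have h0 : modCong p 1 (1 - qv ^ (s * (p : ℤ))) (1 - qv ^ (0 : ℤ)) :=
    modCong_one_sub_qv_zpow hp hodd (by simp)
  have h1 : modCong p 1 (1 - qv ^ (s * (p : ℤ))) 0 := by
    simpa using h0
  have h2 : qint (s * p) = (1 - qv ^ (s * (p : ℤ))) * (1 - qv)⁻¹ := by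
    rw [qint, div_eq_mul_inv]
  have h3 : Loc p ((1 - qv)⁻¹) := by
    have := Loc_inv_one_sub_qv_pow hp hodd (i := 1) le_rfl (by have := p_big hp hodd; omega)
    simpa using this
  have h4 := modCong_mul hp h1 (modCong_refl hp 1 ((1 - qv)⁻¹)) h3 (Loc_zero hp)
  rw [zero_mul] at h4
  rw [h2]
  exact h4
end Atomic
-- qbinom structure
noncomputable def Naux (α : ℤ) (k : ℕ) : RatFunc ℚ :=
  ∏ i ∈ Finset.range k, (1 - qv ^ (α - k + 1 + i))

noncomputable def Daux (k : ℕ) : RatFunc ℚ :=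
  ∏ i ∈ Finset.range k, (1 - qv ^ (i + 1))

lemma qbinom_def (α : ℤ) (k : ℕ) : qbinom α k = Naux α k / Daux k := rfl

lemma Daux_ne_zero (k : ℕ) : Daux k ≠ 0 := by
  refine Finset.prod_ne_zero_iff.mpr fun i _ => ?_
  exact one_sub_qv_pow_ne_zero (by omega)

lemma qbinom_zero_right (α : ℤ) : qbinom α 0 = 1 := by
  simp [qbinom_def, Naux, Daux]

lemma Daux_succ (k : ℕ) : Daux (k + 1) = Daux k * (1 - qv ^ (k + 1)) :=
  Finset.prod_range_succ _ k

lemma Naux_succ_last (α : ℤ) (k : ℕ) :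
    Naux α (k + 1) = Naux (α - 1) k * (1 - qv ^ α) := by
  rw [Naux, Finset.prod_range_succ]
  congr 1
  · refine Finset.prod_congr rfl fun i _ => ?_
    congr 1
    push_cast
    ring
  · congr 1
    push_cast
    ring

lemma Naux_succ_first (α : ℤ) (k : ℕ) :
    Naux α (k + 1) = Naux α k * (1 - qv ^ (α - k)) := by
  rw [Naux, Finset.prod_range_succ']
  congr 1
  · refine Finset.prod_congr rfl fun i _ => ?_
    congr 1
    push_cast
    ring
  · congr 1
    push_cast
    ring

lemma pascal (α : ℤ) (k : ℕ) :
    qbinom α (k + 1) = qbinom (α - 1) k + qv ^ ((k : ℤ) + 1) * qbinom (α - 1) (k + 1) := by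
  have hd : (1 - qv ^ (k + 1) : RatFunc ℚ) = 1 - qv ^ ((k : ℤ) + 1) := by
    rw [← zpow_natCast]
    norm_cast
  rw [qbinom_def, qbinom_def, qbinom_def, Naux_succ_last α k, Naux_succ_first (α - 1) k,
    Daux_succ, hd]
  have hzy : qv ^ ((k : ℤ) + 1) * qv ^ (α - 1 - (k : ℤ)) = qv ^ α := by
    rw [← zpow_add₀ qv_ne_zero]
    congr 1
    ring
  have hD := Daux_ne_zero k
  have hz : (1 : RatFunc ℚ) - qv ^ ((k : ℤ) + 1) ≠ 0 :=
    one_sub_qv_zpow_ne_zero (by omega)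
  set P := Naux (α - 1) k with hP
  set D := Daux k with hD2
  set x := qv ^ α with hx
  set y := qv ^ (α - 1 - (k : ℤ)) with hy
  set z := qv ^ ((k : ℤ) + 1) with hz2
  clear_value P D x y z
  have key : P * (1 - x) = (1 - z) * P + z * ((1 - y) * P) := by
    linear_combination P * hzy
  calc P * (1 - x) / (D * (1 - z)) = ((1 - z) * P + z * ((1 - y) * P)) / (D * (1 - z)) := by
        rw [key]
  _ = P / D + z * (P * (1 - y) / (D * (1 - z))) := by
        field_simp
noncomputable def vsum (k : ℕ) (m n : ℤ) : RatFunc ℚ :=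
  ∑ j ∈ Finset.range (k + 1),
    qv ^ ((m - j) * ((k : ℤ) - j)) * qbinom m j * qbinom n (k - j)

lemma qbinom_zero_left {j : ℕ} (hj : 1 ≤ j) : qbinom 0 j = 0 := by
  rw [qbinom_def, Naux]
  have hmem : j - 1 ∈ Finset.range j := by simp; omega
  rw [Finset.prod_eq_zero hmem]
  · simp
  · have : (0 : ℤ) - j + 1 + ((j : ℕ) - 1 : ℕ) = 0 := by
      push_cast [Nat.cast_sub hj]
      ring
    rw [this]
    simp

lemma vsum_zero_left (k : ℕ) (n : ℤ) : vsum k 0 n = qbinom n k := by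
  rw [vsum, Finset.sum_eq_single 0]
  · simp [qbinom_zero_right]
  · intro j hj hj0
    rw [qbinom_zero_left (by omega)]
    ring
  · intro h
    simp at h

lemma vsum_rec (k : ℕ) (m n : ℤ) :
    vsum (k + 1) m n = vsum k (m - 1) n + qv ^ ((k : ℤ) + 1) * vsum (k + 1) (m - 1) n := by
  unfold vsum
  rw [Finset.sum_range_succ' _ (k + 1)]
  conv_rhs => rw [Finset.sum_range_succ' _ (k + 1)]
  have key : ∀ j ∈ Finset.range (k + 1),
      qv ^ ((m - ((j : ℕ) + 1 : ℕ)) * (((k + 1 : ℕ) : ℤ) - ((j : ℕ) + 1 : ℕ))) *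
          qbinom m (j + 1) * qbinom n (k + 1 - (j + 1))
      = (qv ^ ((m - 1 - j) * ((k : ℤ) - j)) * qbinom (m - 1) j * qbinom n (k - j))
        + qv ^ ((k : ℤ) + 1) *
          (qv ^ ((m - 1 - ((j : ℕ) + 1 : ℕ)) * (((k + 1 : ℕ) : ℤ) - ((j : ℕ) + 1 : ℕ))) *
            qbinom (m - 1) (j + 1) * qbinom n (k + 1 - (j + 1))) := by
    intro j hj
    have hsub : k + 1 - (j + 1) = k - j := by omega
    rw [hsub, pascal m j]
    have he12 : qv ^ ((m - ((j : ℕ) + 1 : ℕ)) * (((k + 1 : ℕ) : ℤ) - ((j : ℕ) + 1 : ℕ)))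
        = qv ^ ((m - 1 - j) * ((k : ℤ) - j)) := by
      congr 1
      push_cast
      ring
    have hz : qv ^ ((m - 1 - j) * ((k : ℤ) - j)) * qv ^ ((j : ℤ) + 1)
        = qv ^ ((k : ℤ) + 1) *
          qv ^ ((m - 1 - ((j : ℕ) + 1 : ℕ)) * (((k + 1 : ℕ) : ℤ) - ((j : ℕ) + 1 : ℕ))) := by
      rw [← zpow_add₀ qv_ne_zero, ← zpow_add₀ qv_ne_zero]
      congr 1
      push_cast
      ring
    rw [he12]
    set A := qbinom (m - 1) j
    set B := qbinom (m - 1) (j + 1)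
    set C := qbinom n (k - j)
    calc qv ^ ((m - 1 - j) * ((k : ℤ) - j)) * (A + qv ^ ((j : ℤ) + 1) * B) * C
        = qv ^ ((m - 1 - j) * ((k : ℤ) - j)) * A * C
          + (qv ^ ((m - 1 - j) * ((k : ℤ) - j)) * qv ^ ((j : ℤ) + 1)) * B * C := by ring
    _ = qv ^ ((m - 1 - j) * ((k : ℤ) - j)) * A * C
          + (qv ^ ((k : ℤ) + 1) *
            qv ^ ((m - 1 - ((j : ℕ) + 1 : ℕ)) * (((k + 1 : ℕ) : ℤ) - ((j : ℕ) + 1 : ℕ)))) * B * C := by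
        rw [hz]
    _ = _ := by ring
  rw [Finset.sum_congr rfl key, Finset.sum_add_distrib, ← Finset.mul_sum]
  have hf0 : qv ^ ((m - ((0 : ℕ) : ℤ)) * (((k + 1 : ℕ) : ℤ) - ((0 : ℕ) : ℤ))) *
      qbinom m 0 * qbinom n (k + 1 - 0)
      = qv ^ ((k : ℤ) + 1) *
        (qv ^ ((m - 1 - ((0 : ℕ) : ℤ)) * (((k + 1 : ℕ) : ℤ) - ((0 : ℕ) : ℤ))) *
          qbinom (m - 1) 0 * qbinom n (k + 1 - 0)) := by
    rw [qbinom_zero_right, qbinom_zero_right]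
    rw [mul_one, mul_one]
    rw [← mul_assoc, ← zpow_add₀ qv_ne_zero]
    congr 2
    push_cast
    ring
  rw [hf0]
  ring
theorem vandermonde : ∀ (k : ℕ) (m n : ℤ), vsum k m n = qbinom (m + n) k := by
  intro k
  induction k with
  | zero =>
    intro m n
    simp [vsum, qbinom_zero_right]
  | succ k ih =>
    have step : ∀ m n : ℤ, vsum (k + 1) m n - qbinom (m + n) (k + 1)
        = qv ^ ((k : ℤ) + 1) * (vsum (k + 1) (m - 1) n - qbinom (m - 1 + n) (k + 1)) := by
      intro m n
      rw [vsum_rec, pascal (m + n) k, ih (m - 1) n]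
      have h1 : m + n - 1 = m - 1 + n := by ring
      rw [h1]
      ring
    intro m n
    have main : ∀ m : ℤ, vsum (k + 1) m n - qbinom (m + n) (k + 1) = 0 := by
      intro m
      induction m using Int.induction_on with
      | zero => rw [vsum_zero_left]; simp
      | succ i hi =>
        have := step (i + 1) n
        have h2 : (i : ℤ) + 1 - 1 = i := by ring
        rw [h2, hi, mul_zero] at this
        exact this
      | pred i hi =>
        have := step (-i) n
        have h2 : (-i : ℤ) - 1 = -(i + 1) := by ring
        rw [h2, hi] at this
        have h3 := (mul_eq_zero.mp this.symm).resolve_left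
          (zpow_ne_zero _ qv_ne_zero)
        have h4 : (-i : ℤ) - 1 + n = -(i + 1) + n := by rw [h2]
        rw [h2]
        exact h3
    exact sub_eq_zero.mp (main m)
section Extras
variable {p : ℕ}

lemma qv_zpow_sum {ι : Type*} (s : Finset ι) (e : ι → ℤ) :
    qv ^ (∑ i ∈ s, e i) = ∏ i ∈ s, qv ^ e i := by
  classical
  induction s using Finset.induction with
  | empty => simp
  | @insert a s' hx ih =>
    rw [Finset.sum_insert hx, Finset.prod_insert hx, zpow_add₀ qv_ne_zero, ih]

lemma Loc_Daux_inv (hp : p.Prime) (hodd : Odd p) {k : ℕ} (hk : k ≤ p - 1) :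
    Loc p ((Daux k)⁻¹) := by
  induction k with
  | zero => simpa [Daux] using Loc_one hp
  | succ k ih =>
    rw [Daux_succ, mul_inv]
    exact Loc_mul hp (ih (by omega)) (Loc_inv_one_sub_qv_pow hp hodd (by omega) hk)

lemma Loc_Naux (hp : p.Prime) (hodd : Odd p) (α : ℤ) (k : ℕ) : Loc p (Naux α k) :=
  Loc_prod hp fun i _ => Loc_one_sub_qv_zpow hp hodd _

lemma Loc_qbinom (hp : p.Prime) (hodd : Odd p) (α : ℤ) {k : ℕ} (hk : k ≤ p - 1) :
    Loc p (qbinom α k) := by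
  rw [qbinom_def, div_eq_mul_inv]
  exact Loc_mul hp (Loc_Naux hp hodd α k) (Loc_Daux_inv hp hodd hk)

lemma Loc_neg_one_pow (hp : p.Prime) (n : ℕ) : Loc p ((-1 : RatFunc ℚ) ^ n) := by
  have := Loc_toF hp ((-1) ^ n)
  simpa [toF_pow, toF_neg, toF_one] using this

lemma Loc_inv_one_sub_qv_zpow_nat (hp : p.Prime) (hodd : Odd p) {i : ℕ} (h1 : 1 ≤ i)
    (h2 : i ≤ p - 1) : Loc p ((1 - qv ^ ((i : ℕ) : ℤ))⁻¹) := by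
  rw [zpow_natCast]
  exact Loc_inv_one_sub_qv_pow hp hodd h1 h2

-- the triangular-number computation
lemma tri_sum : ∀ n : ℕ, (∑ i ∈ Finset.range n, ((i : ℤ) - n)) * 2 = -(n : ℤ) * ((n : ℤ) + 1) := by
  intro n
  induction n with
  | zero => simp
  | succ n ih =>
    rw [Finset.sum_range_succ]
    have h1 : (∑ i ∈ Finset.range n, ((i : ℤ) - ((n : ℕ) + 1 : ℕ)))
        = (∑ i ∈ Finset.range n, ((i : ℤ) - n)) - n := by
      rw [Finset.sum_sub_distrib, Finset.sum_sub_distrib]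
      push_cast
      rw [Finset.sum_const, Finset.sum_const]
      simp
      ring
    push_cast [h1] at *
    linarith

lemma tri_sum_ediv {j : ℕ} (hj : 1 ≤ j) :
    (∑ i ∈ Finset.range (j - 1), ((i : ℤ) - ((j : ℕ) - 1 : ℕ))) =
      -((j : ℤ) * ((j : ℤ) - 1) / 2) := by
  have hc : (((j : ℕ) - 1 : ℕ) : ℤ) = (j : ℤ) - 1 := by
    push_cast [Nat.cast_sub hj]
    ring
  rw [hc]
  have h1 := tri_sum (j - 1)
  rw [hc] at h1
  set S := ∑ i ∈ Finset.range (j - 1), ((i : ℤ) - ((j : ℤ) - 1)) with hS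
  have h2 : S * 2 = -((j:ℤ) * ((j:ℤ) - 1)) := by rw [h1]; ring
  set c := (j : ℤ) * ((j : ℤ) - 1) with hcc
  omega
end Extras
section KeyCong
variable {p : ℕ}

lemma qbinom_factor {j : ℕ} (hj : 1 ≤ j) (m : ℤ) :
    qbinom m j = (1 - qv ^ m) / (1 - qv ^ ((j : ℕ) : ℤ)) * qbinom (m - 1) (j - 1) := by
  obtain ⟨j', rfl⟩ : ∃ j', j = j' + 1 := ⟨j - 1, by omega⟩
  have hred : j' + 1 - 1 = j' := rfl
  rw [hred, qbinom_def, qbinom_def, Naux_succ_last, Daux_succ]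
  have hd : (1 - qv ^ (j' + 1) : RatFunc ℚ) = 1 - qv ^ (((j' + 1 : ℕ) : ℕ) : ℤ) := by
    rw [zpow_natCast]
  rw [hd]
  have h1 : (1 - qv ^ (((j' + 1 : ℕ) : ℕ) : ℤ)) ≠ 0 :=
    one_sub_qv_zpow_ne_zero (by push_cast; omega)
  have h2 := Daux_ne_zero j'
  field_simp

lemma C3 (hp : p.Prime) (hodd : Odd p) {m : ℤ} (hm : (p : ℤ) ∣ m) {n : ℕ} (hn : n ≤ p - 2) :
    modCong p 1 (qbinom (m - 1) n)
      ((-1 : RatFunc ℚ) ^ n * qv ^ (∑ i ∈ Finset.range n, ((i : ℤ) - n))) := by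
  have hp3 := p_big hp hodd
  have h1 : modCong p 1 (Naux (m - 1) n)
      (∏ i ∈ Finset.range n, (-(qv ^ ((i : ℤ) - n)) * (1 - qv ^ ((n : ℤ) - i)))) := by
    apply modCong_prod_cong hp
    · intro i hi
      refine modCong_trans hp
        (modCong_one_sub_qv_zpow hp hodd (c := m - 1 - n + 1 + i) (d := (i : ℤ) - n) ?_)
        (modCong_of_eq hp ?_)
      · have : m - 1 - (n : ℤ) + 1 + i - ((i : ℤ) - n) = m := by ring
        rw [this]
        exact hm
      · have e : qv ^ ((i : ℤ) - n) * qv ^ ((n : ℤ) - i) = 1 := by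
          rw [← zpow_add₀ qv_ne_zero]
          have : (i : ℤ) - n + ((n : ℤ) - i) = 0 := by ring
          rw [this, zpow_zero]
        linear_combination -e
    · intro i _
      exact Loc_one_sub_qv_zpow hp hodd _
    · intro i _
      exact Loc_mul hp (Loc_neg (Loc_qv_zpow hp hodd _)) (Loc_one_sub_qv_zpow hp hodd _)
  have h2 : (∏ i ∈ Finset.range n, (-(qv ^ ((i : ℤ) - n)) * (1 - qv ^ ((n : ℤ) - i))))
      = (-1 : RatFunc ℚ) ^ n * qv ^ (∑ i ∈ Finset.range n, ((i : ℤ) - n)) * Daux n := by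
    rw [Finset.prod_mul_distrib]
    congr 1
    · have hstep : (∏ x ∈ Finset.range n, -(qv ^ ((x : ℤ) - n)))
          = ∏ x ∈ Finset.range n, ((-1) * qv ^ ((x : ℤ) - n)) :=
        Finset.prod_congr rfl fun i _ => by ring
      rw [hstep, Finset.prod_mul_distrib, Finset.prod_const, qv_zpow_sum]
      simp [Finset.card_range]
    · -- ∏ (1 - qv^(n - i)) = Daux n
      have hrefl := Finset.prod_range_reflect (fun i => (1 - qv ^ (i + 1) : RatFunc ℚ)) n
      rw [Daux, ← hrefl]
      refine Finset.prod_congr rfl fun i hi => ?_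
      have hi' : i < n := Finset.mem_range.mp hi
      have : ((n : ℤ) - i) = ((n - 1 - i + 1 : ℕ) : ℤ) := by
        push_cast [Nat.cast_sub (by omega : 1 + i ≤ n)]
        omega
      rw [this, zpow_natCast]
  rw [qbinom_def, div_eq_mul_inv]
  rw [h2] at h1
  have hLocD : Loc p (Daux n) :=
    Loc_prod hp fun i _ => by
      rw [← zpow_natCast]
      exact Loc_one_sub_qv_zpow hp hodd _
  have h3 := modCong_mul hp h1 (modCong_refl hp 1 ((Daux n)⁻¹))
    (Loc_Daux_inv hp hodd (by omega)) (Loc_mul hp (Loc_mul hp (Loc_neg_one_pow hp n)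
      (Loc_qv_zpow hp hodd _)) hLocD)
  refine modCong_trans hp h3 (modCong_of_eq hp ?_)
  rw [mul_assoc, mul_inv_cancel₀ (Daux_ne_zero n), mul_one]
end KeyCong

/-- Key expansion lemma: for an odd prime `p`, `a ∈ {0,…,p-1}`, `s : ℤ`, `α = a + sp`,
and `k ≤ p-1`:
`[α,k]_q ≡ q^{spk}[a,k]_q + Σ_{j=1}^k ([sp]_q/[j]_q)(-1)^{j-1} q^{-binom(j,2)-j(k-j)} [a,k-j]_q
  (mod Φ_p(q)²)`. -/
theorem stmt14 (p : ℕ) (hp : p.Prime) (hodd : Odd p) (a : ℕ) (ha : a ≤ p - 1)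
    (s : ℤ) (k : ℕ) (hk : k ≤ p - 1) :
    modCong p 2
      (qbinom ((a : ℤ) + s * p) k)
      (qv ^ (s * p * k) * qbinom a k +
        ∑ j ∈ Finset.Icc 1 k,
          (qint (s * p) / qint j) * (-1 : RatFunc ℚ) ^ (j - 1) *
            qv ^ (-((j : ℤ) * ((j : ℤ) - 1) / 2) - (j : ℤ) * ((k : ℤ) - j)) *
            qbinom a (k - j)) := by
  have hp3 := p_big hp hodd
  have hone : (1 : RatFunc ℚ) - qv ≠ 0 := by
    have := one_sub_qv_pow_ne_zero (n := 1) one_ne_zero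
    simpa using this
  have hLocOneSubQv : Loc p (1 - qv) :=
    ⟨1 - Polynomial.X, 1, Phi_not_dvd_one hp, by rw [toF_one, mul_one, toF_sub, toF_one, toF_X]⟩
  -- rewrite LHS via Vandermonde
  have hL : qbinom ((a : ℤ) + s * p) k = vsum k (s * p) a := by
    rw [show ((a : ℤ) + s * p) = s * (p : ℤ) + a by ring, ← vandermonde]
  rw [hL]
  unfold vsum
  have hsplit : Finset.range (k + 1) = insert 0 (Finset.Icc 1 k) := by
    ext x; simp; omega
  rw [hsplit, Finset.sum_insert (by simp)]
  apply modCong_add hp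
  · -- j = 0 term
    apply modCong_of_eq hp
    rw [qbinom_zero_right, mul_one]
    have : k - 0 = k := rfl
    rw [this]
    congr 1
    push_cast
    ring
  · -- j ≥ 1 terms
    apply modCong_sum_cong hp
    intro j hj
    obtain ⟨hj1, hjk⟩ := Finset.mem_Icc.mp hj
    have hj0 : ((j : ℕ) : ℤ) ≠ 0 := by exact_mod_cast (by omega : (j : ℤ) ≠ 0)
    have hjz : (1 : RatFunc ℚ) - qv ^ ((j : ℕ) : ℤ) ≠ 0 := one_sub_qv_zpow_ne_zero hj0
    set e := (s * (p : ℤ) - j) * ((k : ℤ) - j) with he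
    set E := (-((j : ℤ) * ((j : ℤ) - 1) / 2) - (j : ℤ) * ((k : ℤ) - j)) with hE
    set F := (1 - qv) * (1 - qv ^ ((j : ℕ) : ℤ))⁻¹ with hF
    set Bj := F * (qv ^ e * qbinom (s * (p : ℤ) - 1) (j - 1) * qbinom a (k - j)) with hBj
    set Bj' := F * ((-1 : RatFunc ℚ) ^ (j - 1) * qv ^ E * qbinom a (k - j)) with hBj'
    have stepA : qv ^ e * qbinom (s * (p : ℤ)) j * qbinom a (k - j) = qint (s * p) * Bj := by
      rw [hBj, hF, qbinom_factor hj1 (s * (p : ℤ))]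
      simp only [qint]
      set u := (1 : RatFunc ℚ) - qv ^ (s * (p : ℤ)) with hu
      set v := (1 : RatFunc ℚ) - qv with hv
      set w := (1 : RatFunc ℚ) - qv ^ ((j : ℕ) : ℤ) with hw
      set P := qv ^ e with hP
      set Q := qbinom (s * (p : ℤ) - 1) (j - 1) with hQ
      set A := qbinom (a : ℤ) (k - j) with hA
      clear_value u v w P Q A
      field_simp
    have stepB : (qint (s * p) / qint j) * (-1 : RatFunc ℚ) ^ (j - 1) * qv ^ E *
        qbinom a (k - j) = qint (s * p) * Bj' := by
      rw [hBj', hF]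
      simp only [qint]
      set u := (1 : RatFunc ℚ) - qv ^ (s * (p : ℤ)) with hu
      set v := (1 : RatFunc ℚ) - qv with hv
      set w := (1 : RatFunc ℚ) - qv ^ ((j : ℕ) : ℤ) with hw
      set y := qv ^ E with hy
      set mm := (-1 : RatFunc ℚ) ^ (j - 1) with hmm
      set A := qbinom (a : ℤ) (k - j) with hA
      clear_value u v w y mm A
      field_simp
    have hFLoc : Loc p F := by
      rw [hF]
      exact Loc_mul hp hLocOneSubQv (Loc_inv_one_sub_qv_zpow_nat hp hodd hj1 (by omega))
    have c1 : modCong p 1 (qv ^ e) (qv ^ (-((j : ℤ) * ((k : ℤ) - j)))) := by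
      apply modCong_qv_zpow hp hodd
      exact ⟨s * ((k : ℤ) - j), by rw [he]; ring⟩
    have c2 := C3 hp hodd (m := s * (p : ℤ)) ⟨s, by ring⟩ (n := j - 1)
      (by omega : j - 1 ≤ p - 2)
    have c12 := modCong_mul hp c1 c2 (Loc_qbinom hp hodd _ (by omega : j - 1 ≤ p - 1))
      (Loc_qv_zpow hp hodd _)
    have c123 := modCong_mul hp c12 (modCong_refl hp 1 (qbinom a (k - j)))
      (Loc_qbinom hp hodd _ (by omega : k - j ≤ p - 1))
      (Loc_mul hp (Loc_qv_zpow hp hodd _) (Loc_mul hp (Loc_neg_one_pow hp _)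
        (Loc_qv_zpow hp hodd _)))
    have hre : qv ^ (-((j : ℤ) * ((k : ℤ) - j))) *
        ((-1 : RatFunc ℚ) ^ (j - 1) * qv ^ (∑ i ∈ Finset.range (j - 1),
          ((i : ℤ) - ((j : ℕ) - 1 : ℕ)))) * qbinom a (k - j)
        = (-1 : RatFunc ℚ) ^ (j - 1) * qv ^ E * qbinom a (k - j) := by
      rw [tri_sum_ediv hj1]
      rw [show qv ^ (-((j : ℤ) * ((k : ℤ) - j))) *
          ((-1 : RatFunc ℚ) ^ (j - 1) * qv ^ (-((j : ℤ) * ((j : ℤ) - 1) / 2)))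
          = (-1 : RatFunc ℚ) ^ (j - 1) * (qv ^ (-((j : ℤ) * ((k : ℤ) - j))) *
            qv ^ (-((j : ℤ) * ((j : ℤ) - 1) / 2))) from by ring]
      rw [← zpow_add₀ qv_ne_zero]
      rw [show -((j : ℤ) * ((k : ℤ) - j)) + -((j : ℤ) * ((j : ℤ) - 1) / 2) = E from by
        rw [hE]; ring]
    have stepC : modCong p 1 Bj Bj' := by
      rw [hBj, hBj']
      refine modCong_mul hp (modCong_refl hp 1 F) ?_ ?_ hFLoc
      · refine modCong_trans hp c123 (modCong_of_eq hp hre)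
      · exact Loc_mul hp (Loc_mul hp (Loc_qv_zpow hp hodd _)
          (Loc_qbinom hp hodd _ (by omega : j - 1 ≤ p - 1)))
          (Loc_qbinom hp hodd _ (by omega : k - j ≤ p - 1))
    refine modCong_trans hp (modCong_of_eq hp stepA) (modCong_trans hp
      (modCong_mul_zero hp (modCong_qint_pmul hp hodd s) stepC)
      (modCong_of_eq hp stepB.symm))
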